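/- Let p be an odd prime. The monomial y_1·y_2·…·y_r·w_1·w_2·…·w_s does not lie in the Hilbert ideal I_H; consequently the top degree of the coinvariant ring R/I_H is at least r + s. -/

import Mathlib

open MvPolynomial

noncomputable section

abbrev DVar (r s : ℕ) := (Fin r ⊕ Fin r) ⊕ (Fin s ⊕ Fin s)

def dswap {r s : ℕ} : DVar r s → DVar r s
  | .inl (.inl i) => .inl (.inr i)
  | .inl (.inr i) => .inl (.inl i)
  | .inr (.inl j) => .inr (.inr j)
  | .inr (.inr j) => .inr (.inl j)

def sigmaMap (F : Type*) [Field F] (r s : ℕ) :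
    MvPolynomial (DVar r s) F →ₐ[F] MvPolynomial (DVar r s) F :=
  MvPolynomial.rename dswap

def rhoCoeff {F : Type*} [Field F] {r s : ℕ} (lam : Fin r → F) : DVar r s → F
  | .inl (.inl i) => lam i
  | .inl (.inr i) => (lam i)⁻¹
  | .inr _ => 1

def rhoMap (F : Type*) [Field F] (r s : ℕ) (lam : Fin r → F) :
    MvPolynomial (DVar r s) F →ₐ[F] MvPolynomial (DVar r s) F :=
  MvPolynomial.aeval fun v => MvPolynomial.C (rhoCoeff lam v) * MvPolynomial.X v

def HilbertIdeal (F : Type*) [Field F] (r s : ℕ) (lam : Fin r → F) :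
    Ideal (MvPolynomial (DVar r s) F) :=
  Ideal.span {f | sigmaMap F r s f = f ∧ rhoMap F r s lam f = f ∧ constantCoeff f = 0}

def IsMonomial {σ F : Type*} [CommSemiring F] (f : MvPolynomial σ F) : Prop :=
  ∃ d : σ →₀ ℕ, f = monomial d 1

def GSet (F : Type*) [Field F] (r s p : ℕ) (lam : Fin r → F) :
    Set (MvPolynomial (DVar r s) F) :=
  {f | ∃ m, IsMonomial m ∧ rhoMap F r s lam m = m ∧ sigmaMap F r s m ≠ m ∧
      m.totalDegree ≤ p ∧ f = m + sigmaMap F r s m} ∪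
  {f | ∃ (m : MvPolynomial (DVar r s) F) (v : DVar r s), IsMonomial m ∧ rhoMap F r s lam m = m ∧ m.totalDegree ≤ p ∧
      X v ∣ m ∧ f = X v * m} ∪
  {f | (∃ i : Fin r, f = X (Sum.inl (Sum.inl i)) * X (Sum.inl (Sum.inr i))) ∨
       (∃ j : Fin s, f = X (Sum.inr (Sum.inl j)) * X (Sum.inr (Sum.inr j)))}

def lmExp {σ F : Type*} [CommSemiring F] (mo : MonomialOrder σ) (f : MvPolynomial σ F) :
    σ →₀ ℕ :=
  mo.toSyn.symm (f.support.sup fun d => mo.toSyn d)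

/-! ### Auxiliary material for Statement 16 -/

namespace Dih16

/-- Projection collapsing `x_i, y_i ↦ i` and `z_j, w_j ↦ j`. -/
def proj {r s : ℕ} : DVar r s → Fin r ⊕ Fin s
  | .inl (.inl i) => .inl i
  | .inl (.inr i) => .inl i
  | .inr (.inl j) => .inr j
  | .inr (.inr j) => .inr j

/-- Scaling coefficients: `x_i ↦ λ_i`, everything else `↦ 1`. -/
def cc {F : Type*} [Field F] {r s : ℕ} (lam : Fin r → F) : DVar r s → F
  | .inl (.inl i) => lam i
  | _ => 1

/-- The test algebra homomorphism `ψ`. -/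
def psi (F : Type*) [Field F] (r s : ℕ) (lam : Fin r → F) :
    MvPolynomial (DVar r s) F →ₐ[F] MvPolynomial (Fin r ⊕ Fin s) F :=
  MvPolynomial.aeval fun v => MvPolynomial.C (cc lam v) * MvPolynomial.X (proj v)

lemma dswap_dswap {r s : ℕ} : ∀ v : DVar r s, dswap (dswap v) = v := by
  rintro ((i | i) | (j | j)) <;> rfl

lemma dswap_injective {r s : ℕ} : Function.Injective (dswap (r := r) (s := s)) :=
  Function.Involutive.injective dswap_dswap

lemma proj_dswap {r s : ℕ} : ∀ v : DVar r s, proj (dswap v) = proj v := by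
  rintro ((i | i) | (j | j)) <;> rfl

lemma dswap_ne {r s : ℕ} : ∀ v : DVar r s, dswap v ≠ v := by
  rintro ((i | i) | (j | j)) <;> simp [dswap]

section general

open scoped Classical

variable {σ τ' F : Type*} [CommSemiring F]

lemma prod_monomial (u : Finset σ) (d : σ → (τ' →₀ ℕ)) (a : σ → F) :
    ∏ v ∈ u, monomial (d v) (a v) = monomial (∑ v ∈ u, d v) (∏ v ∈ u, a v) := by
  classical
  induction u using Finset.induction_on with
  | empty => simp
  | insert _ _ h ih =>
      rw [Finset.prod_insert h, Finset.sum_insert h, Finset.prod_insert h, ih, monomial_mul]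

lemma aeval_scaled_monomial (c : σ → F) (pr : σ → τ') (m : σ →₀ ℕ) (a : F) :
    aeval (fun v => C (c v) * X (pr v)) (monomial m a)
      = monomial (m.mapDomain pr) (a * ∏ v ∈ m.support, c v ^ m v) := by
  classical
  rw [aeval_monomial]
  have h1 : (m.prod fun v k => (C (c v) * X (pr v)) ^ k)
      = ∏ v ∈ m.support, monomial (Finsupp.single (pr v) (m v)) (c v ^ m v) := by
    refine Finset.prod_congr rfl fun v _ => ?_
    show (C (c v) * X (pr v)) ^ m v = _
    rw [mul_pow, ← C_pow, X_pow_eq_monomial, C_mul_monomial, mul_one]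
  rw [h1, prod_monomial]
  have h2 : (m.mapDomain pr) = ∑ v ∈ m.support, Finsupp.single (pr v) (m v) := rfl
  rw [← h2, algebraMap_eq, C_mul_monomial]

lemma coeff_scaled (c : σ → F) (pr : σ → τ') (h : MvPolynomial σ F) (d : τ' →₀ ℕ) :
    coeff d (aeval (fun v => C (c v) * X (pr v)) h)
      = ∑ m ∈ h.support,
          if m.mapDomain pr = d then coeff m h * ∏ v ∈ m.support, c v ^ m v else 0 := by
  classical
  conv_lhs => rw [← support_sum_monomial_coeff h]
  rw [map_sum, coeff_sum]
  refine Finset.sum_congr rfl fun m hm => ?_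
  rw [aeval_scaled_monomial]
  exact coeff_monomial _ _ _

end general

variable {F : Type*} [Field F] {r s : ℕ}

lemma rho_scal_eq_one (lam : Fin r → F) (f : MvPolynomial (DVar r s) F)
    (h2 : rhoMap F r s lam f = f) {m : DVar r s →₀ ℕ} (hm : m ∈ f.support) :
    (∏ v ∈ m.support, rhoCoeff lam v ^ m v) = 1 := by
  classical
  have h := coeff_scaled (rhoCoeff lam) (id : DVar r s → DVar r s) f m
  have hid : (aeval fun v => C (rhoCoeff lam v) * X (id v)) f = rhoMap F r s lam f := rfl
  rw [hid, h2] at h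
  simp only [Finsupp.mapDomain_id] at h
  rw [Finset.sum_ite_eq' f.support m, if_pos hm] at h
  have hne : coeff m f ≠ 0 := mem_support_iff.mp hm
  have h' : coeff m f * 1 = coeff m f * ∏ v ∈ m.support, rhoCoeff lam v ^ m v := by
    rw [mul_one]; exact h
  exact (mul_left_cancel₀ hne h').symm

lemma coeff_dswap (f : MvPolynomial (DVar r s) F) (h1 : sigmaMap F r s f = f)
    (m : DVar r s →₀ ℕ) : coeff (m.mapDomain dswap) f = coeff m f := by
  conv_lhs => rw [← h1]
  exact coeff_rename_mapDomain dswap dswap_injective f m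

lemma cc_pow (lam : Fin r → F) (hlam0 : ∀ i, lam i ≠ 0) :
    ∀ (v : DVar r s) (k : ℕ),
      cc lam v ^ k = rhoCoeff lam v ^ k * cc lam (dswap v) ^ k := by
  rintro ((i | i) | (j | j)) k
  · simp [cc, dswap, rhoCoeff]
  · rw [← mul_pow]
    simp [cc, dswap, rhoCoeff, inv_mul_cancel₀ (hlam0 i)]
  · simp [cc, dswap, rhoCoeff]
  · simp [cc, dswap, rhoCoeff]

lemma scal_dswap (lam : Fin r → F) (hlam0 : ∀ i, lam i ≠ 0) (m : DVar r s →₀ ℕ)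
    (hrho : (∏ v ∈ m.support, rhoCoeff lam v ^ m v) = 1) :
    (∏ v ∈ (m.mapDomain dswap).support, cc lam v ^ (m.mapDomain dswap) v)
      = ∏ v ∈ m.support, cc lam v ^ m v := by
  classical
  rw [Finsupp.mapDomain_support_of_injective dswap_injective,
    Finset.prod_image (fun a _ b _ h => dswap_injective h)]
  have h1 : ∀ v ∈ m.support,
      cc lam (dswap v) ^ (m.mapDomain dswap) (dswap v) = cc lam (dswap v) ^ m v := by
    intro v _
    rw [Finsupp.mapDomain_apply dswap_injective]
  have h2 : (∏ v ∈ m.support, cc lam v ^ m v)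
      = ∏ v ∈ m.support, (rhoCoeff lam v ^ m v * cc lam (dswap v) ^ m v) :=
    Finset.prod_congr rfl fun v _ => cc_pow lam hlam0 v (m v)
  rw [Finset.prod_mul_distrib, hrho, one_mul] at h2
  rw [Finset.prod_congr rfl h1, ← h2]

lemma mapDomain_ge (m : DVar r s →₀ ℕ) (v : DVar r s)
    (hv : v ∈ m.support) (hw : dswap v ∈ m.support) :
    m v + m (dswap v) ≤ (m.mapDomain proj) (proj v) := by
  classical
  have he : (m.mapDomain proj) (proj v)
      = ∑ u ∈ m.support, if proj u = proj v then m u else 0 := by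
    rw [show m.mapDomain proj = ∑ u ∈ m.support, Finsupp.single (proj u) (m u) from rfl,
      Finsupp.finset_sum_apply]
    exact Finset.sum_congr rfl fun u _ => Finsupp.single_apply
  have hsub : ({v, dswap v} : Finset (DVar r s)) ⊆ m.support := by
    intro u hu
    rcases Finset.mem_insert.mp hu with h | h
    · exact h ▸ hv
    · exact (Finset.mem_singleton.mp h) ▸ hw
  have hpair : (∑ u ∈ ({v, dswap v} : Finset (DVar r s)),
      if proj u = proj v then m u else 0) = m v + m (dswap v) := by
    rw [Finset.sum_pair (Ne.symm (dswap_ne v))]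
    rw [if_pos rfl, if_pos (proj_dswap v)]
  rw [he, ← hpair]
  exact Finset.sum_le_sum_of_subset hsub

open scoped Classical in
/-- The crucial ideal: polynomials all of whose squarefree `ψ`-coefficients vanish. -/
def Jideal (lam : Fin r → F) : Ideal (MvPolynomial (DVar r s) F) where
  carrier := {h | ∀ d : (Fin r ⊕ Fin s) →₀ ℕ, (∀ t, d t ≤ 1) → coeff d (psi F r s lam h) = 0}
  zero_mem' := by intro d _; simp
  add_mem' := by
    intro a b ha hb d hd
    rw [map_add, coeff_add, ha d hd, hb d hd, add_zero]
  smul_mem' := by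
    intro g h hh d hd
    rw [smul_eq_mul, map_mul, coeff_mul]
    refine Finset.sum_eq_zero fun x hx => ?_
    have hx2 : x.1 + x.2 = d := Finset.HasAntidiagonal.mem_antidiagonal.mp hx
    have hle : ∀ t, x.2 t ≤ 1 := by
      intro t
      have h1 : x.1 t + x.2 t = d t := by rw [← hx2, Finsupp.add_apply]
      have h2 := hd t
      omega
    rw [hh x.2 hle, mul_zero]

lemma gen_mem_Jideal [CharP F 2] (lam : Fin r → F) (hlam0 : ∀ i, lam i ≠ 0)
    (f : MvPolynomial (DVar r s) F)
    (h1 : sigmaMap F r s f = f) (h2 : rhoMap F r s lam f = f) (h3 : constantCoeff f = 0) :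
    f ∈ Jideal lam := by
  classical
  intro d hd
  rw [show psi F r s lam f
      = (aeval fun v => C (cc lam v) * X (proj v)) f from rfl, coeff_scaled]
  have hprdd : ∀ m : DVar r s →₀ ℕ,
      Finsupp.mapDomain proj (Finsupp.mapDomain dswap m) = Finsupp.mapDomain proj m := by
    intro m
    rw [← Finsupp.mapDomain_comp (f := dswap) (g := proj),
      show proj ∘ dswap = (proj : DVar r s → Fin r ⊕ Fin s) from funext proj_dswap]
  refine Finset.sum_involution (fun m _ => m.mapDomain dswap) ?_ ?_ ?_ ?_
  · -- pairing sums to zero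
    intro m hm
    have hsc := scal_dswap lam hlam0 m (rho_scal_eq_one lam f h2 hm)
    by_cases hc : Finsupp.mapDomain proj m = d
    · rw [if_pos hc, if_pos (by rw [hprdd m]; exact hc),
        coeff_dswap f h1 m, hsc]
      exact CharTwo.add_self_eq_zero _
    · rw [if_neg hc, if_neg (by rw [hprdd m]; exact hc), add_zero]
  · -- no fixed points
    intro m hm hne hfix
    replace hfix : Finsupp.mapDomain dswap m = m := hfix
    by_cases hc : Finsupp.mapDomain proj m = d
    swap
    · exact hne (if_neg hc)
    have hm0 : m ≠ 0 := by
      intro h0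
      rw [h0] at hm
      have hcne : coeff 0 f ≠ 0 := mem_support_iff.mp hm
      exact hcne (by rw [← constantCoeff_eq]; exact h3)
    obtain ⟨v, hv⟩ := Finsupp.support_nonempty_iff.mpr hm0
    have hvth : m v ≠ 0 := Finsupp.mem_support_iff.mp hv
    have hdv : m (dswap v) = m v := by
      have h5 := Finsupp.mapDomain_apply dswap_injective m v
      rw [hfix] at h5
      exact h5
    have hw : dswap v ∈ m.support := Finsupp.mem_support_iff.mpr (by rw [hdv]; exact hvth)
    have hge := mapDomain_ge m v hv hw
    rw [hc] at hge
    have h6 := hd (proj v)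
    omega
  · -- maps into the set
    intro m hm
    exact mem_support_iff.mpr (by rw [coeff_dswap f h1 m]; exact mem_support_iff.mp hm)
  · -- involutive
    intro m hm
    show Finsupp.mapDomain dswap (Finsupp.mapDomain dswap m) = m
    rw [← Finsupp.mapDomain_comp (f := dswap) (g := dswap),
      show dswap ∘ dswap = (id : DVar r s → DVar r s) from funext dswap_dswap,
      Finsupp.mapDomain_id]

end Dih16
theorem prod_y_w_not_mem_hilbertIdeal
    {F : Type*} [Field F] [CharP F 2] {r s p : ℕ} (hp : p.Prime) (hodd : Odd p)
    (ζ : F) (hζ : IsPrimitiveRoot ζ p)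
    (lam : Fin r → F) (hlam : ∀ i, lam i ^ p = 1 ∧ lam i ≠ 1) :
    ((∏ i : Fin r, X (Sum.inl (Sum.inr i))) * ∏ j : Fin s, X (Sum.inr (Sum.inr j))
        : MvPolynomial (DVar r s) F) ∉ HilbertIdeal F r s lam ∧
    ∃ f : MvPolynomial (DVar r s) F,
      f.IsHomogeneous (r + s) ∧ f ∉ HilbertIdeal F r s lam := by
  classical
  have hlam0 : ∀ i, lam i ≠ 0 := by
    intro i h0
    have h := (hlam i).1
    rw [h0, zero_pow hp.ne_zero] at h
    exact zero_ne_one h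
  set M : MvPolynomial (DVar r s) F :=
    (∏ i : Fin r, X (Sum.inl (Sum.inr i))) * ∏ j : Fin s, X (Sum.inr (Sum.inr j)) with hMdef
  set E : (Fin r ⊕ Fin s) →₀ ℕ :=
    (∑ i : Fin r, Finsupp.single (Sum.inl i) 1) + ∑ j : Fin s, Finsupp.single (Sum.inr j) 1
    with hEdef
  have hspan : HilbertIdeal F r s lam ≤ Dih16.Jideal lam := by
    rw [HilbertIdeal]
    refine Ideal.span_le.mpr ?_
    rintro f ⟨hf1, hf2, hf3⟩
    exact Dih16.gen_mem_Jideal lam hlam0 f hf1 hf2 hf3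
  -- compute ψ M
  have hpsiX1 : ∀ i : Fin r,
      Dih16.psi F r s lam (X (Sum.inl (Sum.inr i))) = X (Sum.inl i) := by
    intro i
    rw [Dih16.psi, aeval_X]
    show C (1 : F) * X (Sum.inl i) = X (Sum.inl i)
    rw [map_one, one_mul]
  have hpsiX2 : ∀ j : Fin s,
      Dih16.psi F r s lam (X (Sum.inr (Sum.inr j))) = X (Sum.inr j) := by
    intro j
    rw [Dih16.psi, aeval_X]
    show C (1 : F) * X (Sum.inr j) = X (Sum.inr j)
    rw [map_one, one_mul]
  have hX : ∀ t : Fin r ⊕ Fin s,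
      (X t : MvPolynomial (Fin r ⊕ Fin s) F) = monomial (Finsupp.single t 1) 1 := fun _ => rfl
  have ha : (∏ i : Fin r, (X (Sum.inl i) : MvPolynomial (Fin r ⊕ Fin s) F))
      = monomial (∑ i : Fin r, Finsupp.single (Sum.inl i) 1) 1 := by
    rw [Finset.prod_congr rfl fun i _ => hX (Sum.inl i),
      Dih16.prod_monomial Finset.univ (fun i : Fin r => Finsupp.single (Sum.inl i) 1)
        (fun _ => (1 : F)), Finset.prod_const_one]
  have hb : (∏ j : Fin s, (X (Sum.inr j) : MvPolynomial (Fin r ⊕ Fin s) F))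
      = monomial (∑ j : Fin s, Finsupp.single (Sum.inr j) 1) 1 := by
    rw [Finset.prod_congr rfl fun j _ => hX (Sum.inr j),
      Dih16.prod_monomial Finset.univ (fun j : Fin s => Finsupp.single (Sum.inr j) 1)
        (fun _ => (1 : F)), Finset.prod_const_one]
  have hpsiM : Dih16.psi F r s lam M = monomial E 1 := by
    rw [hMdef, map_mul, map_prod, map_prod,
      Finset.prod_congr rfl fun i _ => hpsiX1 i,
      Finset.prod_congr rfl fun j _ => hpsiX2 j, ha, hb, monomial_mul, one_mul, hEdef]
  have hE : ∀ t : Fin r ⊕ Fin s, E t ≤ 1 := by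
    intro t
    rw [hEdef, Finsupp.add_apply, Finsupp.finset_sum_apply, Finsupp.finset_sum_apply]
    rcases t with i0 | j0
    · simp [Finsupp.single_apply]
    · simp [Finsupp.single_apply]
  have hM : M ∉ Dih16.Jideal lam := by
    intro hmem
    have h0 := hmem E hE
    rw [hpsiM, coeff_monomial, if_pos rfl] at h0
    exact one_ne_zero h0
  have hMnot : M ∉ HilbertIdeal F r s lam := fun h => hM (hspan h)
  refine ⟨hMnot, M, ?_, hMnot⟩
  have h1 : (∏ i : Fin r,
      (X (Sum.inl (Sum.inr i)) : MvPolynomial (DVar r s) F)).IsHomogeneous r := by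
    have := MvPolynomial.IsHomogeneous.prod Finset.univ
      (fun i : Fin r => (X (Sum.inl (Sum.inr i)) : MvPolynomial (DVar r s) F))
      (fun _ => 1) (fun i _ => isHomogeneous_X F _)
    simpa using this
  have h2 : (∏ j : Fin s,
      (X (Sum.inr (Sum.inr j)) : MvPolynomial (DVar r s) F)).IsHomogeneous s := by
    have := MvPolynomial.IsHomogeneous.prod Finset.univ
      (fun j : Fin s => (X (Sum.inr (Sum.inr j)) : MvPolynomial (DVar r s) F))
      (fun _ => 1) (fun j _ => isHomogeneous_X F _)
    simpa using this
  exact h1.mul h2
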